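/- Suppose Σ = I_d and r ≠ 0, so that M = σ² + d. Set ω* = (R + (d + σ² + 1)·I_n)⁻¹ r. Then (I_d, ω*) is a global minimizer of L, and the minimum value is L(I_d, ω*) = (σ² + d) − d · rᵀ (R + (d + σ² + 1)·I_n)⁻¹ r. -/

import Mathlib

open Finset Matrix

/-- The closed-form WPGD risk
`L(P, ω) = M − 2·tr(Σ²P)·(ωᵀr) + M·‖ω‖²·tr(ΣPᵀΣP) + (‖ω‖² + ωᵀRω)·tr(Σ²PᵀΣP)`. -/
noncomputable def Lrisk {d n : ℕ} (Sg : Matrix (Fin d) (Fin d) ℝ)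
    (R : Matrix (Fin n) (Fin n) ℝ) (r : Fin n → ℝ) (M : ℝ)
    (P : Matrix (Fin d) (Fin d) ℝ) (w : Fin n → ℝ) : ℝ :=
  M - 2 * Matrix.trace (Sg ^ 2 * P) * (w ⬝ᵥ r)
    + M * (∑ i, w i ^ 2) * Matrix.trace (Sg * Pᵀ * Sg * P)
    + ((∑ i, w i ^ 2) + w ⬝ᵥ (R *ᵥ w)) * Matrix.trace (Sg ^ 2 * Pᵀ * Sg * P)

private lemma trace_cs {d : ℕ} (P : Matrix (Fin d) (Fin d) ℝ) :
    (Matrix.trace P) ^ 2 ≤ (d : ℝ) * Matrix.trace (Pᵀ * P) := by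
  have h1 : Matrix.trace (Pᵀ * P) = ∑ i, ∑ j, (P j i) ^ 2 := by
    simp [Matrix.trace, Matrix.mul_apply, Matrix.diag, sq]
  rw [h1, Matrix.trace]
  calc (∑ i, Matrix.diag P i) ^ 2 ≤ (Finset.univ.card : ℝ) * ∑ i, (P i i) ^ 2 :=
        sq_sum_le_card_mul_sum_sq
    _ ≤ (d : ℝ) * ∑ i, ∑ j, (P j i) ^ 2 := by
        simp only [Finset.card_univ, Fintype.card_fin]
        gcongr with i _
        exact Finset.single_le_sum (fun j _ => sq_nonneg (P j i)) (Finset.mem_univ i)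

theorem stmt16 (d n : ℕ) (hd : 0 < d) (hn : 0 < n) (σ : ℝ) (hσ : 0 ≤ σ)
    (Sg : Matrix (Fin d) (Fin d) ℝ) (hSgsym : Sg.IsSymm) (hSgpd : Sg.PosDef)
    (R : Matrix (Fin n) (Fin n) ℝ) (hRsym : R.IsSymm) (hRpsd : R.PosSemidef)
    (r : Fin n → ℝ) (hr : r ≠ 0)
    (M : ℝ) (hM : M = σ ^ 2 + Matrix.trace Sg)
    (hSgI : Sg = 1)
    (ωstar : Fin n → ℝ)
    (hωstar : ωstar = (R + ((d : ℝ) + σ ^ 2 + 1) • (1 : Matrix (Fin n) (Fin n) ℝ))⁻¹ *ᵥ r) :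
    (∀ (P : Matrix (Fin d) (Fin d) ℝ) (w : Fin n → ℝ),
      Lrisk Sg R r M 1 ωstar ≤ Lrisk Sg R r M P w) ∧
    Lrisk Sg R r M 1 ωstar
      = (σ ^ 2 + (d : ℝ))
        - (d : ℝ) * (r ⬝ᵥ ((R + ((d : ℝ) + σ ^ 2 + 1) • (1 : Matrix (Fin n) (Fin n) ℝ))⁻¹ *ᵥ r)) := by
  -- setup
  set c : ℝ := (d : ℝ) + σ ^ 2 + 1 with hc
  set A : Matrix (Fin n) (Fin n) ℝ := R + c • (1 : Matrix (Fin n) (Fin n) ℝ) with hA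
  have hcpos : 0 < c := by positivity
  have hApd : A.PosDef := by
    refine Matrix.PosDef.posSemidef_add hRpsd ?_
    have : c • (1 : Matrix (Fin n) (Fin n) ℝ) = Matrix.diagonal (fun _ => c) := by
      ext i j; by_cases h : i = j <;> simp [Matrix.one_apply, Matrix.diagonal, h]
    rw [this]
    exact Matrix.PosDef.diagonal (fun _ => hcpos)
  have hApsd := hApd.posSemidef
  have hAsymm : Aᵀ = A := by
    rw [hA, Matrix.transpose_add, Matrix.transpose_smul, Matrix.transpose_one, hRsym]
  -- A ωstar = r
  have hAω : A *ᵥ ωstar = r := by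
    rw [hωstar, Matrix.mulVec_mulVec, Matrix.mul_nonsing_inv _ (isUnit_iff_ne_zero.mpr hApd.det_pos.ne'), Matrix.one_mulVec]
  have htrSg : Matrix.trace Sg = (d : ℝ) := by rw [hSgI]; simp
  have hMval : M = σ ^ 2 + (d : ℝ) := by rw [hM, htrSg]
  have hcM : c = M + 1 := by rw [hMval, hc]; ring
  -- quadratic form
  set q : (Fin n → ℝ) → ℝ := fun w => w ⬝ᵥ (A *ᵥ w) with hq
  have hqnn : ∀ w, 0 ≤ q w := fun w => by simpa using hApsd.dotProduct_mulVec_nonneg w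
  have hqsymm : ∀ v w : Fin n → ℝ, v ⬝ᵥ (A *ᵥ w) = w ⬝ᵥ (A *ᵥ v) := by
    intro v w
    rw [Matrix.dotProduct_mulVec, ← Matrix.vecMul_transpose, hAsymm, dotProduct_comm]
  -- the constant cst = ωstar ⬝ᵥ r
  set cst : ℝ := ωstar ⬝ᵥ r with hcst
  have hqω0 : ωstar ⬝ᵥ (A *ᵥ ωstar) = cst := by rw [hAω]
  have hqω : q ωstar = cst := hqω0
  -- key quadratic inequality : ∀ α, 0 ≤ q w * α ^ 2 - 2 * α * (w ⬝ᵥ r) + cst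
  have hkey : ∀ (w : Fin n → ℝ) (α : ℝ), 0 ≤ q w * α ^ 2 - 2 * α * (w ⬝ᵥ r) + cst := by
    intro w α
    have h0 : 0 ≤ (α • w - ωstar) ⬝ᵥ (A *ᵥ (α • w - ωstar)) := by
      simpa using hApsd.dotProduct_mulVec_nonneg (α • w - ωstar)
    have hx : w ⬝ᵥ (A *ᵥ ωstar) = w ⬝ᵥ r := by rw [hAω]
    have hexp : (α • w - ωstar) ⬝ᵥ (A *ᵥ (α • w - ωstar))
        = q w * α ^ 2 - 2 * α * (w ⬝ᵥ r) + cst := by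
      rw [Matrix.mulVec_sub, Matrix.mulVec_smul, sub_dotProduct,
        dotProduct_sub, dotProduct_sub]
      rw [smul_dotProduct, smul_dotProduct, dotProduct_smul,
        dotProduct_smul]
      rw [hqsymm ωstar w, hx, hqω0]
      simp only [smul_eq_mul, hq]
      ring
    rw [hexp] at h0; exact h0
  -- rewrite Lrisk with Sg = 1
  have hLr : ∀ (P : Matrix (Fin d) (Fin d) ℝ) (w : Fin n → ℝ),
      Lrisk Sg R r M P w
        = M - 2 * Matrix.trace P * (w ⬝ᵥ r) + q w * Matrix.trace (Pᵀ * P) := by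
    intro P w
    have hsum : (∑ i, w i ^ 2) = w ⬝ᵥ w := by
      simp [dotProduct, sq]
    have hqw : q w = (M + 1) * (w ⬝ᵥ w) + w ⬝ᵥ (R *ᵥ w) := by
      rw [hq]
      simp only [hA, Matrix.add_mulVec, dotProduct_add, Matrix.smul_mulVec,
        Matrix.one_mulVec, dotProduct_smul, smul_eq_mul, hcM]
      ring
    rw [Lrisk, hSgI, hqw, hsum]
    simp only [one_pow, Matrix.one_mul, Matrix.mul_one]
    ring
  -- value at (1, ωstar)
  have htr1 : Matrix.trace (1 : Matrix (Fin d) (Fin d) ℝ) = (d : ℝ) := by simp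
  have hLopt : Lrisk Sg R r M 1 ωstar = M - (d : ℝ) * cst := by
    rw [hLr, Matrix.transpose_one, Matrix.one_mul, htr1, hqω, hcst]
    ring
  constructor
  · intro P w
    rw [hLopt, hLr]
    set t : ℝ := Matrix.trace P with ht
    set s : ℝ := Matrix.trace (Pᵀ * P) with hs
    have hts : t ^ 2 ≤ (d : ℝ) * s := trace_cs P
    have hdpos : (0 : ℝ) < d := by exact_mod_cast hd
    have h1 := hkey w (t / d)
    have hqn := hqnn w
    have heq : (d:ℝ) * (q w * (t/d)^2 - 2*(t/d)*(w ⬝ᵥ r) + cst)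
        = q w * t ^ 2 / d - 2 * t * (w ⬝ᵥ r) + d * cst := by
      field_simp
    have h2 : 0 ≤ q w * t ^ 2 / d - 2 * t * (w ⬝ᵥ r) + d * cst := by
      rw [← heq]; exact mul_nonneg hdpos.le h1
    have h3 : q w * t ^ 2 / d ≤ q w * s := by
      rw [div_le_iff₀ hdpos]
      calc q w * t ^ 2 ≤ q w * ((d:ℝ) * s) := by nlinarith
        _ = q w * s * d := by ring
    linarith
  · rw [hLopt, hMval, hcst, ← hωstar, dotProduct_comm]
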